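/- Let S : [0, 2π] → ℝ be continuous with S(x) > 0 for all x, let x₀ ∈ (0, 2π), and suppose the left derivative and the right derivative of S at x₀ both exist (finite) and are unequal. Let p := S(x₀)·(cos x₀, sin x₀) and J := { S(θ)·(cos θ, sin θ) : θ ∈ [0, 2π] }. Then for every δ > 0, the set J ∩ closedBall(p, δ) is not a C¹ curve. -/

import Mathlib

open Set Metric Filter
open scoped ENNReal NNReal

noncomputable section

/-- The closed ε-neighbourhood of a set: the closure of the union of open ε-balls
centred at points of `E`. -/
def epsNbhd {X : Type*} [MetricSpace X] (E : Set X) (ε : ℝ) : Set X :=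
  closure (⋃ x ∈ E, Metric.ball x ε)

/-- `Unp E` is the set of points having a unique nearest point in (the closure of) `E`. -/
def unp {X : Type*} [MetricSpace X] (E : Set X) : Set X :=
  {z | ∃! y, y ∈ closure E ∧ dist z y = Metric.infDist z E}

/-- The local reach of `E` at `y`: the supremum of radii `r` such that the open ball
`B(y, r)` is contained in `Unp E`. -/
def reachAt {X : Type*} [MetricSpace X] (E : Set X) (y : X) : ℝ≥0∞ :=
  ⨆ (r : ℝ≥0∞) (_ : EMetric.ball y r ⊆ unp E), r

/-- The reach of a set `E` (defined via the closure of `E`). -/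
def reach {X : Type*} [MetricSpace X] (E : Set X) : ℝ≥0∞ :=
  ⨅ y ∈ closure E, reachAt E y

/-- The point of the Euclidean plane with coordinates `(a, b)`. -/
def pt (a b : ℝ) : EuclideanSpace ℝ (Fin 2) := (WithLp.equiv 2 (Fin 2 → ℝ)).symm ![a, b]

/-- The polar coordinate map `(x, r) ↦ (r cos x, r sin x)`, viewed as a self-map of the
Euclidean plane (first coordinate = angle, second coordinate = radius). -/
def polarMap (v : EuclideanSpace ℝ (Fin 2)) : EuclideanSpace ℝ (Fin 2) :=
  pt (v 1 * Real.cos (v 0)) (v 1 * Real.sin (v 0))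

/-- A set `Γ ⊆ ℝ²` is a C¹ curve if it is the image of an injective continuously
differentiable map `γ : [0,1] → ℝ²` with nonvanishing derivative. -/
def IsC1Curve (Γ : Set (EuclideanSpace ℝ (Fin 2))) : Prop :=
  ∃ γ : ℝ → EuclideanSpace ℝ (Fin 2),
    Set.InjOn γ (Set.Icc 0 1) ∧
    ContDiffOn ℝ 1 γ (Set.Icc 0 1) ∧
    (∀ t ∈ Set.Icc (0:ℝ) 1, derivWithin γ (Set.Icc 0 1) t ≠ 0) ∧
    Γ = γ '' Set.Icc 0 1


lemma seq_mem_tangentCone {E : Type*} [NormedAddCommGroup E] [NormedSpace ℝ E]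
    {s : Set E} {p y : E} {x : ℕ → E} {c : ℕ → ℝ}
    (hx : ∀ᶠ n in atTop, x n ∈ s)
    (hc : Tendsto (fun n => ‖c n‖) atTop atTop)
    (hcd : Tendsto (fun n => c n • (x n - p)) atTop (nhds y)) :
    y ∈ tangentConeAt ℝ s p :=
  mem_tangentConeAt_iff_exists_seq_norm_tendsto_atTop.2 ⟨c, fun n => x n - p, hc, by simpa using hx, hcd⟩

lemma tangentCone_image_subset_span {E : Type*} [NormedAddCommGroup E] [NormedSpace ℝ E]
    {γ : ℝ → E}
    (hinj : Set.InjOn γ (Set.Icc 0 1))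
    (hC1 : ContDiffOn ℝ 1 γ (Set.Icc 0 1))
    {t₀ : ℝ} (ht₀ : t₀ ∈ Set.Icc (0:ℝ) 1)
    (hT0 : derivWithin γ (Set.Icc 0 1) t₀ ≠ 0) :
    tangentConeAt ℝ (γ '' Set.Icc 0 1) (γ t₀)
      ⊆ (Submodule.span ℝ {derivWithin γ (Set.Icc 0 1) t₀} : Submodule ℝ E) := by
  classical
  set T := derivWithin γ (Set.Icc 0 1) t₀ with hTdef
  intro y hy
  obtain ⟨c, d, hc, hd, hcd⟩ := mem_tangentConeAt_iff_exists_seq_norm_tendsto_atTop.1 hy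
  have hder : HasDerivWithinAt γ T (Set.Icc 0 1) t₀ :=
    ((hC1.differentiableOn one_ne_zero) t₀ ht₀).hasDerivWithinAt
  have hd0 : Tendsto d atTop (nhds 0) := tangentConeAt.lim_zero _ hc hcd
  set x : ℕ → E := fun n => γ t₀ + d n with hxdef
  have hxs : ∀ᶠ n in atTop, x n ∈ γ '' Set.Icc 0 1 := hd
  set t : ℕ → ℝ := fun n => if hn : ∃ u ∈ Set.Icc (0:ℝ) 1, γ u = x n then hn.choose else t₀
    with htdef
  have htmem : ∀ n, t n ∈ Set.Icc (0:ℝ) 1 := by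
    intro n
    by_cases hn : ∃ u ∈ Set.Icc (0:ℝ) 1, γ u = x n
    · simp only [htdef, dif_pos hn]; exact hn.choose_spec.1
    · simp only [htdef, dif_neg hn]; exact ht₀
  have htx : ∀ᶠ n in atTop, γ (t n) = x n := by
    filter_upwards [hxs] with n hn
    obtain ⟨u, hu, hux⟩ := hn
    have hn' : ∃ u ∈ Set.Icc (0:ℝ) 1, γ u = x n := ⟨u, hu, hux⟩
    simp only [htdef, dif_pos hn']; exact hn'.choose_spec.2
  have hxp : Tendsto x atTop (nhds (γ t₀)) := by
    simpa using tendsto_const_nhds.add hd0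
  have ht : Tendsto t atTop (nhds t₀) := by
    apply tendsto_of_subseq_tendsto
    intro ns hns
    obtain ⟨a, hamem, φ, hφ, hφt⟩ :=
      (isCompact_Icc (a := (0:ℝ)) (b := 1)).tendsto_subseq (x := fun m => t (ns m))
        (fun m => htmem (ns m))
    refine ⟨φ, ?_⟩
    have hta : Tendsto (fun m => t (ns (φ m))) atTop (nhdsWithin a (Set.Icc 0 1)) :=
      tendsto_nhdsWithin_iff.2 ⟨hφt, Eventually.of_forall fun m => htmem _⟩
    have h1 : Tendsto (fun m => γ (t (ns (φ m)))) atTop (nhds (γ a)) :=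
      (hC1.continuousOn a hamem).tendsto.comp hta
    have hnsφ : Tendsto (fun m => ns (φ m)) atTop atTop := hns.comp hφ.tendsto_atTop
    have h2 : Tendsto (fun m => γ (t (ns (φ m)))) atTop (nhds (γ t₀)) := by
      refine (hxp.comp hnsφ).congr' ?_
      filter_upwards [hnsφ.eventually htx] with m hm
      exact hm.symm
    have haeq : a = t₀ := hinj hamem ht₀ (tendsto_nhds_unique h1 h2)
    rw [← haeq]; exact hφt
  -- slope sequence
  set sq : ℕ → E := fun n => if t n = t₀ then T else (t n - t₀)⁻¹ • (γ (t n) - γ t₀) with hsqdef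
  set A : ℕ → ℝ := fun n => c n * (t n - t₀) with hAdef
  have heq : ∀ᶠ n in atTop, c n • d n = A n • sq n := by
    filter_upwards [htx] with n hn
    have hdn : d n = γ (t n) - γ t₀ := by rw [hn]; simp [hxdef]
    by_cases h : t n = t₀
    · have hd0' : d n = 0 := by rw [hdn, h, sub_self]
      simp [hd0', hAdef, h, sub_self]
    · simp only [hsqdef, if_neg h, hAdef]
      rw [hdn, smul_smul, mul_assoc, mul_inv_cancel₀ (sub_ne_zero.2 h), mul_one]
  have hS : Tendsto sq atTop (nhds T) := by
    rw [tendsto_def]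
    intro U hU
    have hslope := hasDerivWithinAt_iff_tendsto_slope.1 hder
    have hU' := mem_nhdsWithin.1 (mem_map.1 (hslope hU))
    obtain ⟨V, hVopen, hVt₀, hVsub⟩ := hU'
    filter_upwards [ht.eventually_mem (hVopen.mem_nhds hVt₀)] with n hn
    by_cases h : t n = t₀
    · have hsq : sq n = T := by simp [hsqdef, h]
      show sq n ∈ U
      rw [hsq]; exact mem_of_mem_nhds hU
    · have hmem : t n ∈ V ∩ (Set.Icc 0 1 \ {t₀}) := ⟨hn, htmem n, h⟩
      have h6 := hVsub hmem
      have hsq : sq n = slope γ t₀ (t n) := by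
        simp [hsqdef, h, slope_def_module]
      show sq n ∈ U
      rw [hsq]; exact h6
  have hTpos : (0:ℝ) < ‖T‖ := norm_pos_iff.2 hT0
  have hSlb : ∀ᶠ n in atTop, ‖T‖ / 2 ≤ ‖sq n‖ :=
    hS.norm.eventually (eventually_ge_nhds (by linarith))
  have hub : ∀ᶠ n in atTop, ‖c n • d n‖ ≤ ‖y‖ + 1 :=
    hcd.norm.eventually (eventually_le_nhds (by linarith [norm_nonneg y]))
  have habound : ∀ᶠ n in atTop, |A n| ≤ (‖y‖ + 1) * 2 / ‖T‖ := by
    filter_upwards [hSlb, hub, heq] with n h1 h2 h3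
    have h4 : |A n| * ‖sq n‖ = ‖c n • d n‖ := by
      rw [h3, norm_smul, Real.norm_eq_abs]
    rw [le_div_iff₀ hTpos]
    nlinarith [abs_nonneg (A n)]
  have hclosed : IsClosed ((Submodule.span ℝ {T} : Submodule ℝ E) : Set E) := by
    haveI := FiniteDimensional.span_of_finite ℝ (Set.finite_singleton T)
    exact (Submodule.span ℝ {T}).closed_of_finiteDimensional
  have hinf0 : Tendsto (fun n => infDist (c n • d n)
      ((Submodule.span ℝ {T} : Submodule ℝ E) : Set E)) atTop (nhds 0) := by
    apply squeeze_zero' (Eventually.of_forall fun n => infDist_nonneg)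
      (g := fun n => (‖y‖ + 1) * 2 / ‖T‖ * ‖sq n - T‖)
    · filter_upwards [heq, habound] with n h1 h2
      have hm : A n • T ∈ ((Submodule.span ℝ {T} : Submodule ℝ E) : Set E) :=
        Submodule.smul_mem _ _ (Submodule.mem_span_singleton_self T)
      calc infDist (c n • d n) _ ≤ dist (c n • d n) (A n • T) := infDist_le_dist_of_mem hm
        _ = ‖A n • sq n - A n • T‖ := by rw [h1, dist_eq_norm]
        _ = |A n| * ‖sq n - T‖ := by rw [← smul_sub, norm_smul, Real.norm_eq_abs]
        _ ≤ (‖y‖ + 1) * 2 / ‖T‖ * ‖sq n - T‖ :=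
            mul_le_mul_of_nonneg_right h2 (norm_nonneg _)
    · have h5 : Tendsto (fun n => ‖sq n - T‖) atTop (nhds 0) := by
        have := (hS.sub (tendsto_const_nhds (x := T))).norm
        simpa using this
      simpa using h5.const_mul ((‖y‖ + 1) * 2 / ‖T‖)
  have hinfy : Tendsto (fun n => infDist (c n • d n)
      ((Submodule.span ℝ {T} : Submodule ℝ E) : Set E)) atTop
      (nhds (infDist y ((Submodule.span ℝ {T} : Submodule ℝ E) : Set E))) :=
    ((continuous_infDist_pt _).tendsto y).comp hcd
  have : infDist y ((Submodule.span ℝ {T} : Submodule ℝ E) : Set E) = 0 :=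
    tendsto_nhds_unique hinfy hinf0
  exact (hclosed.mem_iff_infDist_zero ⟨0, Submodule.zero_mem _⟩).2 this

lemma pt_apply_zero (a b : ℝ) : pt a b 0 = a := by simp [pt]
lemma pt_apply_one (a b : ℝ) : pt a b 1 = b := by simp [pt]

lemma pt_basis (a b : ℝ) : pt a b = a • pt 1 0 + b • pt 0 1 := by
  ext i; fin_cases i <;> simp [pt]

lemma hasDerivWithinAt_pt {g h : ℝ → ℝ} {g' h' x₀ : ℝ} {s : Set ℝ} (hg : HasDerivWithinAt g g' s x₀)
    (hh : HasDerivWithinAt h h' s x₀) :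
    HasDerivWithinAt (fun θ => pt (g θ) (h θ)) (pt g' h') s x₀ := by
  have hfun : (fun θ => pt (g θ) (h θ)) = fun θ => g θ • pt 1 0 + h θ • pt 0 1 := by
    funext θ; exact pt_basis _ _
  rw [hfun, pt_basis g' h']
  exact (hg.smul_const (pt 1 0)).add (hh.smul_const (pt 0 1))


/-- **A wedge point destroys local C¹ smoothness.**
If `S : [0, 2π] → ℝ` is continuous and positive, and at `x₀ ∈ (0, 2π)` the left and right
derivatives of `S` exist but differ, then near the corresponding point
`p = S x₀ · (cos x₀, sin x₀)` of the polar graph `J`, no neighbourhood piece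
`J ∩ closedBall p δ` is a C¹ curve. -/
theorem wedge_point_not_locally_C1
    (S : ℝ → ℝ)
    (hcont : ContinuousOn S (Set.Icc 0 (2 * Real.pi)))
    (hpos : ∀ x ∈ Set.Icc 0 (2 * Real.pi), 0 < S x)
    (x₀ : ℝ) (hx₀ : x₀ ∈ Set.Ioo 0 (2 * Real.pi))
    (dl dr : ℝ)
    (hdl : HasDerivWithinAt S dl (Set.Iic x₀) x₀)
    (hdr : HasDerivWithinAt S dr (Set.Ici x₀) x₀)
    (hne : dl ≠ dr) :
    ∀ δ > (0:ℝ),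
      ¬ IsC1Curve
        (((fun θ : ℝ => pt (S θ * Real.cos θ) (S θ * Real.sin θ)) ''
            Set.Icc 0 (2 * Real.pi)) ∩
          Metric.closedBall (pt (S x₀ * Real.cos x₀) (S x₀ * Real.sin x₀)) δ) := by
  intro δ hδ
  rintro ⟨γ, hinj, hC1, hTnz, hΓ⟩
  set f : ℝ → EuclideanSpace ℝ (Fin 2) :=
    fun θ : ℝ => pt (S θ * Real.cos θ) (S θ * Real.sin θ) with hfdef
  set p : EuclideanSpace ℝ (Fin 2) := pt (S x₀ * Real.cos x₀) (S x₀ * Real.sin x₀) with hpdef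
  set Γ : Set (EuclideanSpace ℝ (Fin 2)) :=
    (f '' Set.Icc 0 (2 * Real.pi)) ∩ Metric.closedBall p δ with hΓdef
  have hx₀Icc : x₀ ∈ Set.Icc 0 (2 * Real.pi) := ⟨hx₀.1.le, hx₀.2.le⟩
  have hfx₀ : f x₀ = p := rfl
  have hpΓ : p ∈ Γ := ⟨⟨x₀, hx₀Icc, rfl⟩, Metric.mem_closedBall_self hδ.le⟩
  rw [hΓ] at hpΓ
  obtain ⟨t₀, ht₀, hγt₀⟩ := hpΓ
  have hsub : tangentConeAt ℝ Γ p ⊆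
      (Submodule.span ℝ {derivWithin γ (Set.Icc 0 1) t₀} : Submodule ℝ (EuclideanSpace ℝ (Fin 2))) := by
    have := tangentCone_image_subset_span hinj hC1 ht₀ (hTnz t₀ ht₀)
    rw [hγt₀, ← hΓ] at this
    exact this
  set T := derivWithin γ (Set.Icc 0 1) t₀ with hTdef
  -- one-sided derivatives of f
  have hcosd : ∀ s : Set ℝ, HasDerivWithinAt Real.cos (-Real.sin x₀) s x₀ :=
    fun s => (Real.hasDerivAt_cos x₀).hasDerivWithinAt
  have hsind : ∀ s : Set ℝ, HasDerivWithinAt Real.sin (Real.cos x₀) s x₀ :=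
    fun s => (Real.hasDerivAt_sin x₀).hasDerivWithinAt
  set wl : EuclideanSpace ℝ (Fin 2) :=
    pt (dl * Real.cos x₀ + S x₀ * -Real.sin x₀) (dl * Real.sin x₀ + S x₀ * Real.cos x₀) with hwldef
  set wr : EuclideanSpace ℝ (Fin 2) :=
    pt (dr * Real.cos x₀ + S x₀ * -Real.sin x₀) (dr * Real.sin x₀ + S x₀ * Real.cos x₀) with hwrdef
  have hwl : HasDerivWithinAt f wl (Set.Iic x₀) x₀ :=
    hasDerivWithinAt_pt (hdl.mul (hcosd _)) (hdl.mul (hsind _))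
  have hwr : HasDerivWithinAt f wr (Set.Ici x₀) x₀ :=
    hasDerivWithinAt_pt (hdr.mul (hcosd _)) (hdr.mul (hsind _))
  -- the common sequence machinery
  have hinv : Tendsto (fun n : ℕ => ((n:ℝ) + 1)⁻¹) atTop (nhds 0) := by
    simpa [one_div] using tendsto_one_div_add_atTop_nhds_zero_nat (𝕜 := ℝ)
  have hinvpos : ∀ n : ℕ, (0:ℝ) < ((n:ℝ) + 1)⁻¹ := fun n => by positivity
  have hcnorm : Tendsto (fun n : ℕ => ‖(n:ℝ) + 1‖) atTop atTop := by
    apply tendsto_abs_atTop_atTop.comp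
    exact tendsto_atTop_add_const_right _ 1 tendsto_natCast_atTop_atTop
  -- left membership
  have hmem_l : -wl ∈ tangentConeAt ℝ Γ p := by
    set θ : ℕ → ℝ := fun n => x₀ - ((n:ℝ) + 1)⁻¹ with hθdef
    have hθlt : ∀ n, θ n < x₀ := fun n => sub_lt_self _ (hinvpos n)
    have hθtend : Tendsto θ atTop (nhds x₀) := by
      have := tendsto_const_nhds (x := x₀) (f := atTop (α := ℕ))
      simpa using this.sub hinv
    have hθIic : Tendsto θ atTop (nhdsWithin x₀ (Set.Iic x₀ \ {x₀})) :=
      tendsto_nhdsWithin_iff.2 ⟨hθtend, Eventually.of_forall fun n => ⟨(hθlt n).le, (hθlt n).ne⟩⟩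
    have hθmem : ∀ᶠ n in atTop, θ n ∈ Set.Icc 0 (2 * Real.pi) := by
      filter_upwards [hinv.eventually (eventually_lt_nhds hx₀.1)] with n hn
      exact ⟨by simpa [hθdef] using hn.le, ((hθlt n).trans hx₀.2).le⟩
    have hfc : Tendsto (fun n => f (θ n)) atTop (nhds p) := by
      have hcw := hwl.continuousWithinAt
      exact hcw.tendsto.comp
        (tendsto_nhdsWithin_iff.2 ⟨hθtend, Eventually.of_forall fun n => (hθlt n).le⟩)
    have hmemΓ : ∀ᶠ n in atTop, f (θ n) ∈ Γ := by
      filter_upwards [hθmem, hfc.eventually_mem (Metric.closedBall_mem_nhds p hδ)] with n h1 h2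
      exact ⟨⟨θ n, h1, rfl⟩, h2⟩
    apply seq_mem_tangentCone (c := fun n : ℕ => (n:ℝ) + 1) hmemΓ hcnorm
    have hslope : Tendsto (fun n => slope f x₀ (θ n)) atTop (nhds wl) :=
      (hasDerivWithinAt_iff_tendsto_slope.1 hwl).comp hθIic
    have hkey : ∀ n : ℕ, ((n:ℝ) + 1) • (f (θ n) - p) = -slope f x₀ (θ n) := by
      intro n
      rw [slope_def_module, hfx₀]
      have h7 : (θ n - x₀)⁻¹ = -(((n:ℝ) + 1)) := by
        simp only [hθdef]
        rw [show x₀ - ((n:ℝ) + 1)⁻¹ - x₀ = -(((n:ℝ) + 1)⁻¹) by ring, inv_neg, inv_inv]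
      rw [h7, neg_smul, neg_neg]
    exact hslope.neg.congr fun n => (hkey n).symm
  -- right membership
  have hmem_r : wr ∈ tangentConeAt ℝ Γ p := by
    set θ : ℕ → ℝ := fun n => x₀ + ((n:ℝ) + 1)⁻¹ with hθdef
    have hθgt : ∀ n, x₀ < θ n := fun n => lt_add_of_pos_right _ (hinvpos n)
    have hθtend : Tendsto θ atTop (nhds x₀) := by
      have := tendsto_const_nhds (x := x₀) (f := atTop (α := ℕ))
      simpa using this.add hinv
    have hθIci : Tendsto θ atTop (nhdsWithin x₀ (Set.Ici x₀ \ {x₀})) :=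
      tendsto_nhdsWithin_iff.2
        ⟨hθtend, Eventually.of_forall fun n => ⟨(hθgt n).le, (hθgt n).ne'⟩⟩
    have hθmem : ∀ᶠ n in atTop, θ n ∈ Set.Icc 0 (2 * Real.pi) := by
      filter_upwards [hθtend.eventually (eventually_le_nhds hx₀.2)] with n hn
      exact ⟨(hx₀.1.trans (hθgt n)).le, hn⟩
    have hfc : Tendsto (fun n => f (θ n)) atTop (nhds p) := by
      have hcw := hwr.continuousWithinAt
      exact hcw.tendsto.comp
        (tendsto_nhdsWithin_iff.2 ⟨hθtend, Eventually.of_forall fun n => (hθgt n).le⟩)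
    have hmemΓ : ∀ᶠ n in atTop, f (θ n) ∈ Γ := by
      filter_upwards [hθmem, hfc.eventually_mem (Metric.closedBall_mem_nhds p hδ)] with n h1 h2
      exact ⟨⟨θ n, h1, rfl⟩, h2⟩
    apply seq_mem_tangentCone (c := fun n : ℕ => (n:ℝ) + 1) hmemΓ hcnorm
    have hslope : Tendsto (fun n => slope f x₀ (θ n)) atTop (nhds wr) :=
      (hasDerivWithinAt_iff_tendsto_slope.1 hwr).comp hθIci
    have hkey : ∀ n : ℕ, ((n:ℝ) + 1) • (f (θ n) - p) = slope f x₀ (θ n) := by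
      intro n
      rw [slope_def_module, hfx₀]
      have h7 : (θ n - x₀)⁻¹ = ((n:ℝ) + 1) := by
        simp only [hθdef]
        rw [show x₀ + ((n:ℝ) + 1)⁻¹ - x₀ = ((n:ℝ) + 1)⁻¹ by ring, inv_inv]
      rw [h7]
    exact hslope.congr fun n => (hkey n).symm
  -- extract coefficients
  obtain ⟨A, hA⟩ := Submodule.mem_span_singleton.1 (hsub hmem_l)
  obtain ⟨B, hB⟩ := Submodule.mem_span_singleton.1 (hsub hmem_r)
  have e0 : A * T 0 = -(dl * Real.cos x₀ + S x₀ * -Real.sin x₀) := by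
    have := congrArg (fun v : EuclideanSpace ℝ (Fin 2) => v 0) hA
    simpa [hwldef, pt_apply_zero] using this
  have e1 : A * T 1 = -(dl * Real.sin x₀ + S x₀ * Real.cos x₀) := by
    have := congrArg (fun v : EuclideanSpace ℝ (Fin 2) => v 1) hA
    simpa [hwldef, pt_apply_one] using this
  have e2 : B * T 0 = dr * Real.cos x₀ + S x₀ * -Real.sin x₀ := by
    have := congrArg (fun v : EuclideanSpace ℝ (Fin 2) => v 0) hB
    simpa [hwrdef, pt_apply_zero] using this
  have e3 : B * T 1 = dr * Real.sin x₀ + S x₀ * Real.cos x₀ := by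
    have := congrArg (fun v : EuclideanSpace ℝ (Fin 2) => v 1) hB
    simpa [hwrdef, pt_apply_one] using this
  have hS0 : 0 < S x₀ := hpos x₀ hx₀Icc
  have hpyth := Real.sin_sq_add_cos_sq x₀
  have hdet : (dl * Real.cos x₀ + S x₀ * -Real.sin x₀) * (dr * Real.sin x₀ + S x₀ * Real.cos x₀)
      - (dl * Real.sin x₀ + S x₀ * Real.cos x₀) * (dr * Real.cos x₀ + S x₀ * -Real.sin x₀) = 0 := by
    have hz : (A * T 0) * (B * T 1) - (A * T 1) * (B * T 0) = 0 := by ring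
    rw [e0, e1, e2, e3] at hz
    linarith
  have key : S x₀ * (dl - dr) = 0 := by
    linear_combination hdet - S x₀ * (dl - dr) * hpyth
  rcases mul_eq_zero.1 key with h | h
  · exact absurd h hS0.ne'
  · exact hne (sub_eq_zero.1 h)
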